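/- If q1 and q2 are no-rollback walks from u to v in a simple graph G and q1 ≃ q2, then q1 = q2. (Uniqueness part of the paper's Theorem 1: each homotopy class of walks contains at most one no-rollback walk.) -/
import Mathlib

open SimpleGraph

variable {V : Type*}

/-- One-step move on walks: insert or delete a backtrack `x, y, x`
(with `y` adjacent to `x`) at some position of the walk. -/
inductive Move (G : SimpleGraph V) : ∀ {u v : V}, G.Walk u v → G.Walk u v → Prop
  | insert {u v x y : V} (p : G.Walk u x) (q : G.Walk x v) (h : G.Adj x y) :
      Move G (p.append q) (p.append (Walk.cons h (Walk.cons h.symm q)))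
  | delete {u v x y : V} (p : G.Walk u x) (q : G.Walk x v) (h : G.Adj x y) :
      Move G (p.append (Walk.cons h (Walk.cons h.symm q))) (p.append q)

/-- Two walks with the same endpoints are homotopic if one can be obtained from
the other by a finite sequence of one-step moves. -/
def Homotopic (G : SimpleGraph V) {u v : V} (p q : G.Walk u v) : Prop :=
  Relation.ReflTransGen (fun a b : G.Walk u v => Move G a b) p q

/-- A walk is a no-rollback walk if its vertex sequence contains no segment of
the form `x, y, x`, i.e. there is no index `i` at which the `i`-th and
`(i+2)`-th vertices of the walk coincide. -/
def NoRollback {G : SimpleGraph V} {u v : V} (p : G.Walk u v) : Prop :=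
  ∀ (i : ℕ) (h : i + 2 < p.support.length),
    p.support[i]'(by omega) ≠ p.support[i + 2]'h

section Aux

variable {G : SimpleGraph V}

/-- `getVert` version of `NoRollback`. -/
def NR {u v : V} (p : G.Walk u v) : Prop :=
  ∀ i : ℕ, i + 2 ≤ p.length → p.getVert i ≠ p.getVert (i + 2)

lemma support_getElem_eq_getVert {u v : V} (p : G.Walk u v) :
    ∀ (i : ℕ) (h : i < p.support.length), p.support[i] = p.getVert i := by
  induction p with
  | nil => intro i h; simp [Walk.support_nil] at h; subst h; rfl
  | cons h p ih =>
    intro i hi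
    cases i with
    | zero => rfl
    | succ n =>
      simp only [Walk.support_cons, List.length_cons] at hi
      simp only [Walk.support_cons, List.getElem_cons_succ, ih n (by omega)]
      rfl

lemma noRollback_iff_NR {u v : V} (p : G.Walk u v) : NoRollback p ↔ NR p := by
  constructor
  · intro h i hi
    have h2 : i + 2 < p.support.length := by rw [Walk.length_support]; omega
    have := h i h2
    rwa [support_getElem_eq_getVert _ i (by omega),
      support_getElem_eq_getVert _ (i+2) h2] at this
  · intro h i hi
    have hl : i + 2 ≤ p.length := by rw [Walk.length_support] at hi; omega
    have := h i hl
    rwa [support_getElem_eq_getVert _ i (by omega),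
      support_getElem_eq_getVert _ (i+2) hi]

lemma NR_cons_iff {u w v : V} (h : G.Adj u w) (p : G.Walk w v) :
    NR (Walk.cons h p) ↔ u ≠ p.getVert 1 ∧ NR p := by
  constructor
  · intro hnr
    constructor
    · by_cases hl : 1 ≤ p.length
      · have := hnr 0 (by simp [Walk.length_cons]; omega)
        simpa [Walk.getVert_zero, Walk.getVert_cons_succ] using this
      · rw [Walk.getVert_of_length_le p (by omega)]
        have : p.getVert 0 = v := Walk.getVert_of_length_le p (by omega)
        rw [Walk.getVert_zero] at this
        rw [← this]; exact h.ne
    · intro i hi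
      have := hnr (i+1) (by simp [Walk.length_cons]; omega)
      simpa [Walk.getVert_cons_succ] using this
  · rintro ⟨h1, h2⟩ i hi
    cases i with
    | zero =>
      simpa [Walk.getVert_zero, Walk.getVert_cons_succ] using h1
    | succ n =>
      simp only [Walk.length_cons] at hi
      have := h2 n (by omega)
      simpa [Walk.getVert_cons_succ] using this

/-- Append a step in front of a walk, cancelling if it creates a backtrack. -/
noncomputable def reduceCons {u w v : V} (h : G.Adj u w) :
    G.Walk w v → G.Walk u v
  | Walk.nil => Walk.cons h Walk.nil
  | @Walk.cons _ _ _ x _ h' r' =>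
      letI := Classical.decEq V
      if hx : x = u then r'.copy hx rfl else Walk.cons h (Walk.cons h' r')

@[simp] lemma reduceCons_nil {u w : V} (h : G.Adj u w) :
    reduceCons h (Walk.nil : G.Walk w w) = Walk.cons h Walk.nil := rfl

@[simp] lemma reduceCons_cons_self {u w v : V} (h : G.Adj u w) (h' : G.Adj w u)
    (r' : G.Walk u v) : reduceCons h (Walk.cons h' r') = r' := by
  simp [reduceCons]

@[simp] lemma reduceCons_cons_ne {u w x v : V} (h : G.Adj u w) (h' : G.Adj w x)
    (r' : G.Walk x v) (hx : x ≠ u) :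
    reduceCons h (Walk.cons h' r') = Walk.cons h (Walk.cons h' r') := by
  simp [reduceCons, hx]

lemma reduceCons_eq_cons {u w v : V} (h : G.Adj u w) (r : G.Walk w v)
    (hne : u ≠ r.getVert 1) : reduceCons h r = Walk.cons h r := by
  cases r with
  | nil => rfl
  | cons h' r' =>
    rw [Walk.getVert_cons_succ, Walk.getVert_zero] at hne
    exact reduceCons_cons_ne h h' r' (Ne.symm hne)

lemma NR_reduceCons {u w v : V} (h : G.Adj u w) (r : G.Walk w v) (hr : NR r) :
    NR (reduceCons h r) := by
  cases r with
  | nil =>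
    intro i hi
    simp [Walk.length_cons, Walk.length_nil] at hi
  | @cons _ x _ h' r' =>
    rw [NR_cons_iff] at hr
    by_cases hx : x = u
    · subst hx
      simpa using hr.2
    · rw [reduceCons_cons_ne h h' r' hx, NR_cons_iff]
      refine ⟨?_, (NR_cons_iff h' r').mpr hr⟩
      rw [Walk.getVert_cons_succ, Walk.getVert_zero]
      exact fun he => hx he.symm

lemma reduceCons_reduceCons {x y v : V} (h : G.Adj x y) (r : G.Walk x v)
    (hr : NR r) : reduceCons h (reduceCons h.symm r) = r := by
  cases r with
  | nil => simp
  | @cons _ z _ h' r' =>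
    rw [NR_cons_iff] at hr
    by_cases hz : z = y
    · subst hz
      rw [reduceCons_cons_self h.symm h' r', reduceCons_eq_cons h r' hr.1]
    · rw [reduceCons_cons_ne h.symm h' r' hz, reduceCons_cons_self h h.symm _]

/-- Reduce a walk to a no-rollback walk. -/
noncomputable def reduce {u v : V} : G.Walk u v → G.Walk u v
  | Walk.nil => Walk.nil
  | Walk.cons h p => reduceCons h (reduce p)

lemma NR_reduce {u v : V} (p : G.Walk u v) : NR (reduce p) := by
  induction p with
  | nil => intro i hi; simp [reduce, Walk.length_nil] at hi
  | cons h p ih => exact NR_reduceCons h _ ih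

lemma reduce_eq_self {u v : V} (p : G.Walk u v) (hp : NR p) : reduce p = p := by
  induction p with
  | nil => rfl
  | cons h p ih =>
    rw [NR_cons_iff] at hp
    rw [reduce, ih hp.2, reduceCons_eq_cons h p hp.1]

lemma reduce_cons_append {u w x v : V} (h : G.Adj u w) (p : G.Walk w x)
    (q : G.Walk x v) :
    reduce ((Walk.cons h p).append q) = reduceCons h (reduce (p.append q)) := rfl

lemma reduce_append_cons_cons {u x v y : V} (p : G.Walk u x) (q : G.Walk x v)
    (h : G.Adj x y) :
    reduce (p.append (Walk.cons h (Walk.cons h.symm q))) = reduce (p.append q) := by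
  induction p with
  | nil =>
    simp only [Walk.nil_append]
    show reduceCons h (reduceCons h.symm (reduce q)) = reduce q
    rw [reduceCons_reduceCons h (reduce q) (NR_reduce q)]
  | cons h' p ih =>
    simp only [Walk.cons_append]
    show reduceCons h' _ = reduceCons h' _
    rw [ih]

lemma reduce_move {u v : V} {p q : G.Walk u v} (hm : Move G p q) :
    reduce p = reduce q := by
  cases hm with
  | insert p q h => exact (reduce_append_cons_cons p q h).symm
  | delete p q h => exact reduce_append_cons_cons p q h

end Aux

/-- Theorem 1 (uniqueness): each homotopy class contains at most one
no-rollback walk. -/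
theorem noRollback_homotopic_unique (G : SimpleGraph V) (u v : V)
    (q1 q2 : G.Walk u v) (h1 : NoRollback q1) (h2 : NoRollback q2)
    (h : Homotopic G q1 q2) : q1 = q2 := by
  have key : reduce q1 = reduce q2 := by
    clear h1 h2
    induction h with
    | refl => rfl
    | tail _ hm ih => exact Eq.trans ih (reduce_move hm)
  rwa [reduce_eq_self q1 ((noRollback_iff_NR q1).mp h1),
    reduce_eq_self q2 ((noRollback_iff_NR q2).mp h2)] at key
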